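/- Let A and E be real m×n matrices. Let σ₁ ≥ σ₂ denote the two largest singular values of A and set δ := σ₁ − σ₂, and assume δ > 0. Let v₁ be a unit right-singular vector of A corresponding to σ₁ and let v₁' be a unit right-singular vector of A+E corresponding to the largest singular value of A+E. Then, for any such choice of v₁ and v₁', one has sin∠(v₁, v₁') ≤ 2‖E‖/δ. (The same statement holds with left-singular vectors in place of right-singular vectors.) -/

import Mathlib

open MeasureTheory ProbabilityTheory Matrix

theorem Matrix.isHermitian_transpose_mul_self {m n : Type*} [Fintype m] (A : Matrix m n ℝ) :
    (Aᵀ * A).IsHermitian := by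
  simpa using Matrix.isHermitian_conjTranspose_mul_self A

noncomputable def sval {m n : ℕ} (A : Matrix (Fin m) (Fin n) ℝ) (k : ℕ) : ℝ :=
  if h : k - 1 < n then
    Real.sqrt (((Matrix.isHermitian_transpose_mul_self A).eigenvalues ∘
      Tuple.sort (Matrix.isHermitian_transpose_mul_self A).eigenvalues)
      (Fin.rev ⟨k - 1, h⟩))
  else 0

noncomputable def spNorm {m n : Type*} [Fintype m] [Fintype n] [DecidableEq n]
    (A : Matrix m n ℝ) : ℝ :=
  ‖LinearMap.toContinuousLinearMap (Matrix.toEuclideanLin A)‖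

noncomputable def sinAngle {d : ℕ} (u v : Fin d → ℝ) : ℝ :=
  Real.sqrt (1 - (u ⬝ᵥ v) ^ 2 / ((u ⬝ᵥ u) * (v ⬝ᵥ v)))

def Concentrated {Ω : Type*} [MeasurableSpace Ω] (μ : Measure Ω) {m n : ℕ}
    (E : Ω → Matrix (Fin m) (Fin n) ℝ) (C₁ c₁ γ : ℝ) : Prop :=
  ∀ (u : Fin m → ℝ) (v : Fin n → ℝ), u ⬝ᵥ u = 1 → v ⬝ᵥ v = 1 →
    ∀ t : ℝ, 0 < t →
      μ {ω | t < |u ⬝ᵥ ((E ω) *ᵥ v)|} ≤ ENNReal.ofReal (C₁ * Real.exp (-c₁ * t ^ γ))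

noncomputable def symMat {m n : ℕ} (E : Matrix (Fin m) (Fin n) ℝ) :
    Matrix (Fin (m + n)) (Fin (m + n)) ℝ :=
  (Matrix.reindex finSumFinEquiv finSumFinEquiv) (Matrix.fromBlocks 0 E Eᵀ 0)

noncomputable def eigVal {d : ℕ} (M : Matrix (Fin d) (Fin d) ℝ) (k : ℕ) : ℝ := by
  classical
  exact if hM : M.IsHermitian then
    (if h : k - 1 < d then
      ((hM.eigenvalues ∘ Tuple.sort hM.eigenvalues) (Fin.rev ⟨k - 1, h⟩))
    else 0)
  else 0

noncomputable def toE {n : ℕ} (v : Fin n → ℝ) : EuclideanSpace ℝ (Fin n) :=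
  (WithLp.equiv 2 (Fin n → ℝ)).symm v

noncomputable def projSub {n : ℕ} (K : Submodule ℝ (EuclideanSpace ℝ (Fin n))) :
    EuclideanSpace ℝ (Fin n) →L[ℝ] EuclideanSpace ℝ (Fin n) :=
  K.subtypeL.comp (K.orthogonalProjectionOnto)

noncomputable def projSpan {n : ℕ} (S : Set (Fin n → ℝ)) :
    EuclideanSpace ℝ (Fin n) →L[ℝ] EuclideanSpace ℝ (Fin n) :=
  projSub (Submodule.span ℝ (toE '' S))

noncomputable def sinAngleSub {n : ℕ} (S T : Set (Fin n → ℝ)) : ℝ :=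
  ‖projSpan S - projSpan T‖

def IsBernoulliMatrix {Ω : Type*} [MeasurableSpace Ω] (μ : Measure Ω) {n : ℕ}
    (E : Ω → Matrix (Fin n) (Fin n) ℝ) : Prop :=
  (∀ i j, Measurable fun ω => E ω i j) ∧
  iIndepFun (β := fun _ : Fin n × Fin n => ℝ)
    (fun p ω => E ω p.1 p.2) μ ∧
  (∀ i j, μ {ω | E ω i j = 1} = ENNReal.ofReal (1/2) ∧
          μ {ω | E ω i j = -1} = ENNReal.ofReal (1/2))


-- Auxiliary lemmas
lemma toE_smul {n : ℕ} (r : ℝ) (v : Fin n → ℝ) : toE (r • v) = r • toE v := rfl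
lemma toE_coe {n : ℕ} (x : EuclideanSpace ℝ (Fin n)) : toE ⇑x = x := rfl
lemma inner_toE {n : ℕ} (u v : Fin n → ℝ) : (inner ℝ (toE u) (toE v) : ℝ) = u ⬝ᵥ v := by
  simp [toE, EuclideanSpace.inner_eq_star_dotProduct, dotProduct, mul_comm]
lemma norm_toE_sq {n : ℕ} (u : Fin n → ℝ) : ‖toE u‖ ^ 2 = u ⬝ᵥ u := by
  rw [← real_inner_self_eq_norm_sq, inner_toE]
lemma toEL_toE {m n : ℕ} (M : Matrix (Fin m) (Fin n) ℝ) (x : Fin n → ℝ) :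
    Matrix.toEuclideanLin M (toE x) = toE (M *ᵥ x) := by
  simp [toE, Matrix.toEuclideanLin_apply]
lemma spNorm_mulVec_le {m n : ℕ} (M : Matrix (Fin m) (Fin n) ℝ) (x : Fin n → ℝ) :
    ‖toE (M *ᵥ x)‖ ≤ spNorm M * ‖toE x‖ := by
  have := (LinearMap.toContinuousLinearMap (Matrix.toEuclideanLin M)).le_opNorm (toE x)
  simpa [toEL_toE, spNorm] using this
lemma mulVec_dot {m n : ℕ} (M : Matrix (Fin m) (Fin n) ℝ) (u : Fin n → ℝ) (w : Fin m → ℝ) :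
    (M *ᵥ u) ⬝ᵥ w = u ⬝ᵥ (Mᵀ *ᵥ w) := by
  simp only [dotProduct, mulVec, dotProduct, Finset.sum_mul, Finset.mul_sum, transpose_apply]
  rw [Finset.sum_comm]
  apply Finset.sum_congr rfl; intro i _; apply Finset.sum_congr rfl; intro jj _; ring
lemma dot_le_norm {n : ℕ} (u w : Fin n → ℝ) : u ⬝ᵥ w ≤ ‖toE u‖ * ‖toE w‖ := by
  rw [← inner_toE]; exact real_inner_le_norm _ _
lemma le_of_sq_le_sq' {a b : ℝ} (hb : 0 ≤ b) (h : a ^ 2 ≤ b ^ 2) (ha : 0 ≤ a) : a ≤ b := by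
  nlinarith
lemma arith1 {sp s2 ep s d : ℝ} (hs20 : 0 ≤ s2) (hsp0 : 0 ≤ sp) (hep : 0 ≤ ep)
    (hs0 : 0 ≤ s) (hs1 : s ≤ 1) (hd : 0 < d) (hed : 2 * ep < d) (hW : d + s2 ≤ sp + ep)
    (hineq : sp ^ 2 * s ^ 2 ≤ s2 ^ 2 * s ^ 2 + (s2 * s) * ep + (ep * s) * sp) :
    s * d ≤ 2 * ep := by
  by_cases hs : s = 0
  · rw [hs, zero_mul]; linarith
  · have hspos : 0 < s := lt_of_le_of_ne hs0 (Ne.symm hs)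
    have hpos : 0 < sp + s2 := by linarith
    have h9 : (sp - s2) * s ^ 2 ≤ ep * s := by
      apply le_of_mul_le_mul_right _ hpos
      nlinarith [hineq]
    have h11 : (d - ep) * s ^ 2 ≤ ep * s := le_trans (by nlinarith [sq_nonneg s]) h9
    have h13 : (d - ep) * s ≤ ep := by
      apply le_of_mul_le_mul_right _ hspos
      nlinarith [h11]
    nlinarith [mul_le_of_le_one_right hep hs1]

lemma conjT_eq {m n : ℕ} (A : Matrix (Fin m) (Fin n) ℝ) : Aᴴ = Aᵀ := rfl

section Spec
variable {m n : ℕ}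
noncomputable def eigV (A : Matrix (Fin m) (Fin n) ℝ) : Fin n → ℝ :=
  (Matrix.isHermitian_transpose_mul_self A).eigenvalues
noncomputable def eigB (A : Matrix (Fin m) (Fin n) ℝ) :
    OrthonormalBasis (Fin n) ℝ (EuclideanSpace ℝ (Fin n)) :=
  (Matrix.isHermitian_transpose_mul_self A).eigenvectorBasis

variable (A : Matrix (Fin m) (Fin n) ℝ)

lemma eig_nonneg (i : Fin n) : 0 ≤ eigV A i :=
  (Matrix.posSemidef_conjTranspose_mul_self A).eigenvalues_nonneg i

lemma eigB_mulVec (i : Fin n) : (Aᵀ * A) *ᵥ ⇑(eigB A i) = eigV A i • ⇑(eigB A i) :=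
  (Matrix.isHermitian_transpose_mul_self A).mulVec_eigenvectorBasis i

lemma coeff_mulVec (x : Fin n → ℝ) (i : Fin n) :
    (inner ℝ (eigB A i) (toE ((Aᵀ * A) *ᵥ x)) : ℝ) = eigV A i * (inner ℝ (eigB A i) (toE x) : ℝ) := by
  rw [← toE_coe (eigB A i), inner_toE, inner_toE]
  have h1 : (⇑(eigB A i) ⬝ᵥ ((Aᵀ * A) *ᵥ x)) = ((Aᵀ * A) *ᵥ ⇑(eigB A i)) ⬝ᵥ x := by
    rw [Matrix.dotProduct_mulVec, ← Matrix.mulVec_transpose]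
    congr 1
    rw [← conjT_eq, ← conjT_eq A, (Matrix.isHermitian_conjTranspose_mul_self A).eq]
  rw [h1, eigB_mulVec, smul_dotProduct]
  rfl

lemma dot_H_eq_sum (x : Fin n → ℝ) :
    x ⬝ᵥ ((Aᵀ * A) *ᵥ x) = ∑ i, eigV A i * (inner ℝ (eigB A i) (toE x) : ℝ) ^ 2 := by
  rw [← inner_toE, ← OrthonormalBasis.sum_inner_mul_inner (eigB A)]
  apply Finset.sum_congr rfl; intro i _
  rw [coeff_mulVec, real_inner_comm (toE x)]; ring

lemma dot_eq_sum (x y : Fin n → ℝ) :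
    x ⬝ᵥ y = ∑ i, (inner ℝ (eigB A i) (toE x) : ℝ) * (inner ℝ (eigB A i) (toE y) : ℝ) := by
  rw [← inner_toE, ← OrthonormalBasis.sum_inner_mul_inner (eigB A)]
  apply Finset.sum_congr rfl; intro i _
  rw [real_inner_comm (toE x)]

lemma sval_eq (k : ℕ) (h : k - 1 < n) :
    sval A k = Real.sqrt (eigV A (Tuple.sort (eigV A) (Fin.rev ⟨k - 1, h⟩))) := by
  rw [sval, dif_pos h]; rfl

lemma sval_nonneg (k : ℕ) : 0 ≤ sval A k := by
  rw [sval]; split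
  · exact Real.sqrt_nonneg _
  · exact le_refl 0

noncomputable def topIdx (hn : 0 < n) : Fin n :=
  Tuple.sort (eigV A) (Fin.rev ⟨0, hn⟩)

lemma sval_one_sq (hn : 0 < n) : sval A 1 ^ 2 = eigV A (topIdx A hn) := by
  rw [sval_eq A 1 (by omega : 1 - 1 < n), Real.sq_sqrt (eig_nonneg A _)]
  rfl

lemma eig_le_top (hn : 0 < n) (i : Fin n) : eigV A i ≤ eigV A (topIdx A hn) := by
  have hm := Tuple.monotone_sort (eigV A)
  have h1 : eigV A i = (eigV A ∘ Tuple.sort (eigV A)) ((Tuple.sort (eigV A)).symm i) := by simp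
  rw [h1]
  exact hm (by rw [Fin.le_def]; simp [Fin.rev]; omega)

lemma eig_le_sval2 (hn : 0 < n) (i : Fin n) (hi : i ≠ topIdx A hn) :
    eigV A i ≤ (sval A 2) ^ 2 := by
  rcases lt_or_ge 1 n with h2 | h2
  · rw [sval_eq A 2 (by omega : 2 - 1 < n), Real.sq_sqrt (eig_nonneg A _)]
    have hm := Tuple.monotone_sort (eigV A)
    have h1 : eigV A i = (eigV A ∘ Tuple.sort (eigV A)) ((Tuple.sort (eigV A)).symm i) := by simp
    rw [h1]
    have hk : (Tuple.sort (eigV A)).symm i ≠ Fin.rev ⟨0, hn⟩ := by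
      intro h; apply hi; rw [topIdx, ← h]; simp
    apply hm
    rw [Fin.le_def]
    have h3 := ((Tuple.sort (eigV A)).symm i).isLt
    have h4 : ((Tuple.sort (eigV A)).symm i).val ≠ (Fin.rev (⟨0, hn⟩ : Fin n)).val := by
      intro h; exact hk (Fin.ext h)
    simp [Fin.rev] at h4 ⊢
    omega
  · exfalso
    have hn1 : n = 1 := by omega
    apply hi; subst hn1
    exact Subsingleton.elim i _

lemma rayleigh_le_top (hn : 0 < n) (x : Fin n → ℝ) :
    x ⬝ᵥ ((Aᵀ * A) *ᵥ x) ≤ eigV A (topIdx A hn) * (x ⬝ᵥ x) := by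
  rw [dot_H_eq_sum, dot_eq_sum A x x, Finset.mul_sum]
  apply Finset.sum_le_sum; intro i _
  have h1 := eig_le_top A hn i
  nlinarith [sq_nonneg (inner ℝ (eigB A i) (toE x) : ℝ)]

lemma dot_self_mulVec (x : Fin n → ℝ) :
    (A *ᵥ x) ⬝ᵥ (A *ᵥ x) = x ⬝ᵥ ((Aᵀ * A) *ᵥ x) := by
  rw [mulVec_dot, Matrix.mulVec_mulVec]

lemma spNorm_eq_sval_one (hn : 0 < n) : spNorm A = sval A 1 := by
  apply le_antisymm
  · apply ContinuousLinearMap.opNorm_le_bound _ (sval_nonneg A 1)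
    intro y
    have hy : y = toE (WithLp.equiv 2 _ y) := rfl
    set x : Fin n → ℝ := WithLp.equiv 2 _ y with hx
    rw [hy]
    have hA : (LinearMap.toContinuousLinearMap (Matrix.toEuclideanLin A)) (toE x)
        = toE (A *ᵥ x) := by simpa using toEL_toE A x
    rw [hA]
    apply le_of_sq_le_sq' (mul_nonneg (sval_nonneg A 1) (norm_nonneg _)) _ (norm_nonneg _)
    rw [mul_pow, norm_toE_sq, norm_toE_sq, dot_self_mulVec, sval_one_sq A hn]
    exact rayleigh_le_top A hn x
  · set x : Fin n → ℝ := ⇑(eigB A (topIdx A hn)) with hx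
    have hxx : x ⬝ᵥ x = 1 := by
      rw [← inner_toE, toE_coe, real_inner_self_eq_norm_sq, (eigB A).orthonormal.1, one_pow]
    have h2 : ‖toE (A *ᵥ x)‖ ^ 2 = sval A 1 ^ 2 := by
      rw [norm_toE_sq, dot_self_mulVec, sval_one_sq A hn, hx, eigB_mulVec,
        dotProduct_smul, smul_eq_mul, ← hx, hxx, mul_one]
    have h3 : ‖toE (A *ᵥ x)‖ = sval A 1 := by
      have := sval_nonneg A 1
      nlinarith [norm_nonneg (toE (A *ᵥ x))]
    have h4 := spNorm_mulVec_le A x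
    have h5 : ‖toE x‖ = 1 := by
      have := norm_toE_sq x
      rw [hxx] at this
      nlinarith [norm_nonneg (toE x)]
    rw [h3, h5, mul_one] at h4
    exact h4

lemma spNorm_neg (C : Matrix (Fin m) (Fin n) ℝ) : spNorm (-C) = spNorm C := by
  rw [spNorm, spNorm, map_neg, map_neg, norm_neg]

lemma spNorm_add_le (B C : Matrix (Fin m) (Fin n) ℝ) : spNorm (B + C) ≤ spNorm B + spNorm C := by
  rw [spNorm, spNorm, spNorm, map_add, map_add]; exact norm_add_le _ _

lemma spNorm_weyl (B C : Matrix (Fin m) (Fin n) ℝ) : spNorm B ≤ spNorm (B + C) + spNorm C := by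
  have h := spNorm_add_le (B + C) (-C)
  rw [spNorm_neg] at h
  simpa using h
end Spec

theorem stmt0 {m n : ℕ} (A E : Matrix (Fin m) (Fin n) ℝ)
    (hdelta : 0 < sval A 1 - sval A 2)
    (v₁ v₁' : Fin n → ℝ)
    (hu : v₁ ⬝ᵥ v₁ = 1) (hu' : v₁' ⬝ᵥ v₁' = 1)
    (hv : (Aᵀ * A) *ᵥ v₁ = (sval A 1) ^ 2 • v₁)
    (hv' : ((A + E)ᵀ * (A + E)) *ᵥ v₁' = (sval (A + E) 1) ^ 2 • v₁') :
    sinAngle v₁ v₁' ≤ 2 * spNorm E / (sval A 1 - sval A 2) := by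
  have hn : 0 < n := by
    by_contra hcon
    have hn0 : n = 0 := by omega
    subst hn0
    rw [sval, sval] at hdelta
    simp at hdelta
  set σ₁ := sval A 1 with hσ₁def
  set σ₂ := sval A 2 with hσ₂def
  set σ' := sval (A + E) 1 with hσ'def
  set ε := spNorm E with hεdef
  have hε : 0 ≤ ε := norm_nonneg _
  have hσ₂0 : 0 ≤ σ₂ := sval_nonneg A 2
  have hσ₁0 : 0 ≤ σ₁ := sval_nonneg A 1
  have hσ'0 : 0 ≤ σ' := sval_nonneg (A + E) 1
  set c := v₁ ⬝ᵥ v₁' with hc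
  have hcomm : v₁' ⬝ᵥ v₁ = c := by rw [dotProduct_comm]
  have hc2 : c ^ 2 ≤ 1 := by
    have h := real_inner_mul_inner_self_le (toE v₁) (toE v₁')
    rw [inner_toE, inner_toE, inner_toE, hu, hu'] at h
    nlinarith [h]
  have hsin : sinAngle v₁ v₁' = Real.sqrt (1 - c ^ 2) := by
    rw [sinAngle, hu, hu', ← hc]; norm_num
  rw [hsin]
  set s := Real.sqrt (1 - c ^ 2) with hsdef
  have hs0 : 0 ≤ s := Real.sqrt_nonneg _
  have hs2 : s ^ 2 = 1 - c ^ 2 := Real.sq_sqrt (by linarith)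
  have hs1 : s ≤ 1 := by
    rw [hsdef]; exact Real.sqrt_le_one.mpr (by nlinarith [sq_nonneg c])
  by_cases hcase : 1 ≤ 2 * ε / (σ₁ - σ₂)
  · linarith
  · push_neg at hcase
    have hεδ : 2 * ε < σ₁ - σ₂ := by
      rw [div_lt_one hdelta] at hcase; exact hcase
    have hW : σ₁ ≤ σ' + ε := by
      have h1 := spNorm_weyl A E
      rwa [spNorm_eq_sval_one A hn, spNorm_eq_sval_one (A + E) hn] at h1
    set p := v₁' - c • v₁ with hpdef
    have hpv : p ⬝ᵥ v₁ = 0 := by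
      simp only [hpdef, sub_dotProduct, smul_dotProduct, smul_eq_mul, hu, hcomm]
      ring
    have hvp : v₁ ⬝ᵥ p = 0 := by rw [dotProduct_comm]; exact hpv
    have hpp : p ⬝ᵥ p = s ^ 2 := by
      rw [hs2]
      simp only [hpdef, sub_dotProduct, dotProduct_sub,
        smul_dotProduct, dotProduct_smul, smul_eq_mul, hu, hu', hcomm, ← hc]
      ring
    have hsplit : v₁' = p + c • v₁ := by rw [hpdef]; abel
    have hpv' : p ⬝ᵥ v₁' = s ^ 2 := by
      calc p ⬝ᵥ v₁' = p ⬝ᵥ (p + c • v₁) := by rw [← hsplit]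
        _ = s ^ 2 := by
            rw [dotProduct_add, dotProduct_smul, smul_eq_mul, hpp, hpv]; ring
    set j := topIdx A hn with hj
    have hlam : σ₁ ^ 2 = eigV A j := sval_one_sq A hn
    have hcoeff : ∀ i, i ≠ j → (inner ℝ (eigB A i) (toE v₁) : ℝ) = 0 := by
      intro i hi
      have h1 := coeff_mulVec A v₁ i
      rw [hv] at h1
      have h2 : (inner ℝ (eigB A i) (toE (σ₁ ^ 2 • v₁)) : ℝ)
          = σ₁ ^ 2 * inner ℝ (eigB A i) (toE v₁) := by
        rw [toE_smul, real_inner_smul_right]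
      rw [h2] at h1
      have hlt : eigV A i < σ₁ ^ 2 := by
        have h3 := eig_le_sval2 A hn i hi
        have h4 : σ₂ ^ 2 < σ₁ ^ 2 :=
          pow_lt_pow_left₀ (by linarith) hσ₂0 (by norm_num)
        linarith
      by_contra hX
      exact absurd (mul_right_cancel₀ hX h1) (ne_of_gt hlt)
    have hsum1 : ∑ i, (inner ℝ (eigB A i) (toE v₁) : ℝ) * (inner ℝ (eigB A i) (toE v₁) : ℝ) = 1 := by
      rw [← dot_eq_sum, hu]
    have hcj : (inner ℝ (eigB A j) (toE v₁) : ℝ) ≠ 0 := by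
      intro h0
      have hzero : ∑ i, (inner ℝ (eigB A i) (toE v₁) : ℝ) * (inner ℝ (eigB A i) (toE v₁) : ℝ)
          = 0 := by
        apply Finset.sum_eq_zero
        intro i _
        by_cases hij : i = j
        · rw [hij, h0, mul_zero]
        · rw [hcoeff i hij, zero_mul]
      rw [hzero] at hsum1
      norm_num at hsum1
    have hpj : (inner ℝ (eigB A j) (toE p) : ℝ) = 0 := by
      have h0 : v₁ ⬝ᵥ p = 0 := hvp
      rw [dot_eq_sum A v₁ p, Finset.sum_eq_single j
        (fun i _ hij => by rw [hcoeff i hij, zero_mul])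
        (fun h => absurd (Finset.mem_univ j) h)] at h0
      exact (mul_eq_zero.mp h0).resolve_left hcj
    have hRp : p ⬝ᵥ ((Aᵀ * A) *ᵥ p) ≤ σ₂ ^ 2 * (p ⬝ᵥ p) := by
      rw [dot_H_eq_sum, dot_eq_sum A p p, Finset.mul_sum]
      apply Finset.sum_le_sum; intro i _
      by_cases hij : i = j
      · rw [hij, hpj]; simp
      · have h5 := eig_le_sval2 A hn i hij
        rw [show (inner ℝ (eigB A i) (toE p) : ℝ) * (inner ℝ (eigB A i) (toE p) : ℝ)
          = (inner ℝ (eigB A i) (toE p) : ℝ) ^ 2 from (pow_two _).symm]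
        exact mul_le_mul_of_nonneg_right h5 (sq_nonneg _)
    have hnp2 : ‖toE p‖ ^ 2 = s ^ 2 := by rw [norm_toE_sq, hpp]
    have hnp : ‖toE p‖ = s := by
      rw [← Real.sqrt_sq (norm_nonneg (toE p)), hnp2, Real.sqrt_sq hs0]
    have hnv' : ‖toE v₁'‖ = 1 := by
      have h6 := norm_toE_sq v₁'
      rw [hu'] at h6
      rw [← Real.sqrt_sq (norm_nonneg (toE v₁')), h6, Real.sqrt_one]
    have hAp : ‖toE (A *ᵥ p)‖ ≤ σ₂ * s := by
      apply le_of_sq_le_sq' (mul_nonneg hσ₂0 hs0) _ (norm_nonneg _)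
      rw [norm_toE_sq, dot_self_mulVec, mul_pow]
      calc p ⬝ᵥ ((Aᵀ * A) *ᵥ p) ≤ σ₂ ^ 2 * (p ⬝ᵥ p) := hRp
        _ = σ₂ ^ 2 * s ^ 2 := by rw [hpp]
    have hEp : ‖toE (E *ᵥ p)‖ ≤ ε * s := by
      have h := spNorm_mulVec_le E p
      rwa [hnp] at h
    have hEv' : ‖toE (E *ᵥ v₁')‖ ≤ ε := by
      have h := spNorm_mulVec_le E v₁'
      rwa [hnv', mul_one] at h
    have hAEv' : ‖toE ((A + E) *ᵥ v₁')‖ ≤ σ' := by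
      have h := spNorm_mulVec_le (A + E) v₁'
      rwa [hnv', mul_one, spNorm_eq_sval_one (A + E) hn] at h
    have hPH' : p ⬝ᵥ (((A + E)ᵀ * (A + E)) *ᵥ v₁') = σ' ^ 2 * s ^ 2 := by
      rw [hv', dotProduct_smul, smul_eq_mul, hpv']
    have hPH : p ⬝ᵥ ((Aᵀ * A) *ᵥ v₁') ≤ σ₂ ^ 2 * s ^ 2 := by
      calc p ⬝ᵥ ((Aᵀ * A) *ᵥ v₁') = p ⬝ᵥ ((Aᵀ * A) *ᵥ (p + c • v₁)) := by rw [← hsplit]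
        _ = p ⬝ᵥ ((Aᵀ * A) *ᵥ p) + c * (p ⬝ᵥ ((Aᵀ * A) *ᵥ v₁)) := by
            rw [Matrix.mulVec_add, Matrix.mulVec_smul, dotProduct_add,
              dotProduct_smul, smul_eq_mul]
        _ = p ⬝ᵥ ((Aᵀ * A) *ᵥ p) := by
            rw [hv, dotProduct_smul, smul_eq_mul, hpv]; ring
        _ ≤ σ₂ ^ 2 * s ^ 2 := by rw [← hpp]; exact hRp
    have hexp : p ⬝ᵥ (((A + E)ᵀ * (A + E)) *ᵥ v₁') - p ⬝ᵥ ((Aᵀ * A) *ᵥ v₁')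
        = (A *ᵥ p) ⬝ᵥ (E *ᵥ v₁') + (E *ᵥ p) ⬝ᵥ ((A + E) *ᵥ v₁') := by
      have hm : ((A + E)ᵀ * (A + E)) = Aᵀ * A + (Aᵀ * E + Eᵀ * (A + E)) := by
        rw [Matrix.transpose_add, Matrix.add_mul, Matrix.mul_add, add_assoc]
      have e1 : p ⬝ᵥ ((Aᵀ * E) *ᵥ v₁') = (A *ᵥ p) ⬝ᵥ (E *ᵥ v₁') := by
        rw [← Matrix.mulVec_mulVec]; exact (mulVec_dot A p _).symm
      have e2 : p ⬝ᵥ ((Eᵀ * (A + E)) *ᵥ v₁') = (E *ᵥ p) ⬝ᵥ ((A + E) *ᵥ v₁') := by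
        rw [← Matrix.mulVec_mulVec]; exact (mulVec_dot E p _).symm
      rw [hm, Matrix.add_mulVec, dotProduct_add, Matrix.add_mulVec, dotProduct_add,
        e1, e2]
      ring
    have h7 : (A *ᵥ p) ⬝ᵥ (E *ᵥ v₁') ≤ (σ₂ * s) * ε := by
      calc (A *ᵥ p) ⬝ᵥ (E *ᵥ v₁') ≤ ‖toE (A *ᵥ p)‖ * ‖toE (E *ᵥ v₁')‖ := dot_le_norm _ _
        _ ≤ (σ₂ * s) * ε := by
            apply mul_le_mul hAp hEv' (norm_nonneg _) (mul_nonneg hσ₂0 hs0)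
    have h8 : (E *ᵥ p) ⬝ᵥ ((A + E) *ᵥ v₁') ≤ (ε * s) * σ' := by
      calc (E *ᵥ p) ⬝ᵥ ((A + E) *ᵥ v₁') ≤ ‖toE (E *ᵥ p)‖ * ‖toE ((A + E) *ᵥ v₁')‖ :=
            dot_le_norm _ _
        _ ≤ (ε * s) * σ' := by
            apply mul_le_mul hEp hAEv' (norm_nonneg _) (mul_nonneg hε hs0)
    have hineq : σ' ^ 2 * s ^ 2 ≤ σ₂ ^ 2 * s ^ 2 + (σ₂ * s) * ε + (ε * s) * σ' := by
      linarith
    rw [le_div_iff₀ hdelta]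
    exact arith1 hσ₂0 hσ'0 hε hs0 hs1 hdelta hεδ (by linarith) hineq
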